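/- Let m ≥ 2, n = 2m+1, q = 3^n, d = 2·3^m + 1 odd, and assume: (a) for every z ∈ GF(q)\GF(3), the total number of pairs (x,y) ∈ GF(q)² with x+y+z+1 = 0, x^d+y^d+z^d+1 = 0, (x+1)(x+z) ≠ 0 plus the number with x+y-z+1 = 0, x^d+y^d-z^d+1 = 0, (x+1)(x-z) ≠ 0 equals 2; and (b) no subset of at most 3 nonzero squares satisfies the corresponding homogeneous system. Then for every pair of distinct nonzero squares x₃, x₄ in GF(q), there exists exactly one 2-subset {x₁, x₂} of nonzero squares disjoint from {x₃, x₄} and signs c₁,...,c₄ ∈ {1,-1} with c₁x₁ + c₂x₂ + c₃x₃ + c₄x₄ = 0 and c₁x₁^d + c₂x₂^d + c₃x₃^d + c₄x₄^d = 0. Consequently the supports of weight-4 codewords of the dual code form a Steiner system S(2, 4, (q-1)/2). -/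

import Mathlib

private lemma st15_dichot {F : Type*} [Field F] [Fintype F] [DecidableEq F]
    (hns : ¬ IsSquare (-1 : F)) {t : F} (ht : t ≠ 0) (h : ¬ IsSquare t) :
    IsSquare (-t) := by
  have h1 : quadraticChar F t = -1 := quadraticChar_neg_one_iff_not_isSquare.mpr h
  have h2 : quadraticChar F (-1) = -1 := quadraticChar_neg_one_iff_not_isSquare.mpr hns
  have h3 : quadraticChar F (-t) = 1 := by
    rw [show (-t : F) = -1 * t by ring, map_mul, h1, h2]; ring
  exact (quadraticChar_one_iff_isSquare (neg_ne_zero.mpr ht)).mp h3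

private lemma st15_notboth {F : Type*} [Field F]
    (hns : ¬ IsSquare (-1 : F)) {t : F} (ht : t ≠ 0) (h : IsSquare t)
    (h' : IsSquare (-t)) : False := by
  apply hns
  have : IsSquare (-t * t⁻¹) := h'.mul h.inv
  rwa [show -t * t⁻¹ = -(t * t⁻¹) by ring, mul_inv_cancel₀ ht] at this

private lemma st15_noRel3 {F : Type*} [Field F] {d : ℕ} (hd : Odd d)
    (hns : ¬ IsSquare (-1 : F))
    (hdi : ∀ t : F, t ≠ 0 → ¬ IsSquare t → IsSquare (-t))
    (hb : ¬ ∃ (s : Finset F) (c : F → F),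
      s.Nonempty ∧ s.card ≤ 3 ∧ (∀ x ∈ s, x ≠ 0 ∧ IsSquare x) ∧
      (∀ x ∈ s, c x = 1 ∨ c x = -1) ∧
      ∑ x ∈ s, c x * x = 0 ∧ ∑ x ∈ s, c x * x ^ d = 0)
    (a b c : F) (ha0 : a ≠ 0) (hb0 : b ≠ 0) (hc0 : c ≠ 0)
    (hab : a ≠ b) (hab' : a ≠ -b) (hac : a ≠ c) (hac' : a ≠ -c)
    (hbc : b ≠ c) (hbc' : b ≠ -c)
    (h1 : a + b + c = 0) (h2 : a ^ d + b ^ d + c ^ d = 0) : False := by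
  classical
  apply hb
  have hchar2 : (-1 : F) ≠ 1 := fun h => hns (by rw [h]; exact IsSquare.one)
  have hneg : ∀ t : F, t ≠ 0 → -t ≠ t := by
    intro t ht h
    have h2 : t * (1 + 1) = 0 := by linear_combination -h
    rcases mul_eq_zero.mp h2 with h3 | h3
    · exact ht h3
    · exact hchar2 (by linear_combination -h3)
  set sg : F → F := fun t => if IsSquare t then 1 else -1 with hsgdef
  have hsgval : ∀ t : F, sg t = 1 ∨ sg t = -1 := by
    intro t; by_cases h : IsSquare t <;> simp [hsgdef, h]
  have hAsq : ∀ t : F, t ≠ 0 → IsSquare (sg t * t) := by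
    intro t ht; by_cases h : IsSquare t <;> simp [hsgdef, h]
    · exact hdi t ht h
  have hA0 : ∀ t : F, t ≠ 0 → sg t * t ≠ 0 := by
    intro t ht
    rcases hsgval t with h | h <;> rw [h] <;> simpa using ht
  have hAor : ∀ t : F, sg t * t = t ∨ sg t * t = -t := by
    intro t; rcases hsgval t with h | h <;> rw [h] <;> [left; right] <;> ring
  have hsgsq : ∀ t : F, sg t * sg t = 1 := by
    intro t; rcases hsgval t with h | h <;> rw [h] <;> ring
  have hsgd : ∀ t : F, (sg t) ^ d = sg t := by
    intro t; rcases hsgval t with h | h <;> rw [h]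
    · exact one_pow d
    · exact hd.neg_one_pow
  set A := sg a * a with hA
  set B := sg b * b with hB
  set C := sg c * c with hC
  have hABne : A ≠ B := by
    rcases hAor a with h1 | h1 <;> rcases hAor b with h2 | h2 <;>
      rw [hA, hB, h1, h2]
    · exact hab
    · exact hab'
    · intro h; exact hab' (by linear_combination -h)
    · intro h; exact hab (by linear_combination -h)
  have hACne : A ≠ C := by
    rcases hAor a with h1 | h1 <;> rcases hAor c with h2 | h2 <;>
      rw [hA, hC, h1, h2]
    · exact hac
    · exact hac'
    · intro h; exact hac' (by linear_combination -h)
    · intro h; exact hac (by linear_combination -h)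
  have hBCne : B ≠ C := by
    rcases hAor b with h1 | h1 <;> rcases hAor c with h2 | h2 <;>
      rw [hB, hC, h1, h2]
    · exact hbc
    · exact hbc'
    · intro h; exact hbc' (by linear_combination -h)
    · intro h; exact hbc (by linear_combination -h)
  set cf : F → F := fun t => if t = a ∨ t = b ∨ t = c then 1 else -1 with hcfdef
  have hcfA : ∀ (t : F), t ≠ 0 → (t = a ∨ t = b ∨ t = c) →
      (-t ≠ a) → (-t ≠ b) → (-t ≠ c) → cf (sg t * t) = sg t := by
    intro t ht htm hta htb htc
    by_cases h : IsSquare t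
    · have hs : sg t = 1 := by simp [hsgdef, h]
      rw [hs, one_mul, hcfdef]
      simp only [if_pos htm]
    · have hs : sg t = -1 := by simp [hsgdef, h]
      rw [hs, hcfdef]
      simp only [neg_one_mul]
      rw [if_neg]
      push_neg
      exact ⟨hta, htb, htc⟩
  have hcfa : cf A = sg a := by
    refine hcfA a ha0 (Or.inl rfl) ?_ ?_ ?_
    · exact hneg a ha0
    · intro h; exact hab' (by linear_combination -h)
    · intro h; exact hac' (by linear_combination -h)
  have hcfb : cf B = sg b := by
    refine hcfA b hb0 (Or.inr (Or.inl rfl)) ?_ ?_ ?_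
    · intro h; exact hab' (by linear_combination -h)
    · exact hneg b hb0
    · intro h; exact hbc' (by linear_combination -h)
  have hcfc : cf C = sg c := by
    refine hcfA c hc0 (Or.inr (Or.inr rfl)) ?_ ?_ ?_
    · intro h; exact hac' (by linear_combination -h)
    · intro h; exact hbc' (by linear_combination -h)
    · exact hneg c hc0
  refine ⟨{A, B, C}, cf, ?_, ?_, ?_, ?_, ?_, ?_⟩
  · exact ⟨A, Finset.mem_insert_self _ _⟩
  · exact le_trans (Finset.card_insert_le _ _)
      (by have := Finset.card_insert_le B {C}; simp at this ⊢; omega)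
  · intro x hx
    rcases Finset.mem_insert.mp hx with rfl | hx
    · exact ⟨hA0 a ha0, hAsq a ha0⟩
    rcases Finset.mem_insert.mp hx with rfl | hx
    · exact ⟨hA0 b hb0, hAsq b hb0⟩
    · rw [Finset.mem_singleton.mp hx]; exact ⟨hA0 c hc0, hAsq c hc0⟩
  · intro x hx
    rcases Finset.mem_insert.mp hx with rfl | hx
    · rw [hcfa]; exact hsgval a
    rcases Finset.mem_insert.mp hx with rfl | hx
    · rw [hcfb]; exact hsgval b
    · rw [Finset.mem_singleton.mp hx, hcfc]; exact hsgval c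
  · rw [Finset.sum_insert (by simp [hABne, hACne]),
      Finset.sum_insert (by simp [hBCne]), Finset.sum_singleton,
      hcfa, hcfb, hcfc, hA, hB, hC]
    linear_combination h1 + a * hsgsq a + b * hsgsq b + c * hsgsq c
  · rw [Finset.sum_insert (by simp [hABne, hACne]),
      Finset.sum_insert (by simp [hBCne]), Finset.sum_singleton,
      hcfa, hcfb, hcfc, hA, hB, hC, mul_pow, mul_pow, mul_pow,
      hsgd, hsgd, hsgd]
    linear_combination h2 + a ^ d * hsgsq a + b ^ d * hsgsq b + c ^ d * hsgsq c

private lemma st15_keyZ {F : Type*} [Field F] {d : ℕ} (hd : Odd d)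
    (hns : ¬ IsSquare (-1 : F))
    (hdi : ∀ t : F, t ≠ 0 → ¬ IsSquare t → IsSquare (-t))
    (hb : ¬ ∃ (s : Finset F) (c : F → F),
      s.Nonempty ∧ s.card ≤ 3 ∧ (∀ x ∈ s, x ≠ 0 ∧ IsSquare x) ∧
      (∀ x ∈ s, c x = 1 ∨ c x = -1) ∧
      ∑ x ∈ s, c x * x = 0 ∧ ∑ x ∈ s, c x * x ^ d = 0)
    (h3 : (3 : F) = 0) {z : F} (hz0 : z ≠ 0) (hz1 : z ≠ 1) (hzm1 : z ≠ -1)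
    (u ε η : F) (hε : ε = 1 ∨ ε = -1) (hη : η = 1 ∨ η = -1)
    (e1 : u + ε * z + η = 0) (e2 : u ^ d + ε * z ^ d + η = 0) : False := by
  rcases hε with rfl | rfl <;> rcases hη with rfl | rfl
  · refine st15_noRel3 hd hns hdi hb u z 1 ?_ hz0 one_ne_zero ?_ ?_ ?_ ?_ hz1 hzm1
      (by linear_combination e1) (by linear_combination e2)
    · intro h; exact hzm1 (by linear_combination e1 - h)
    · intro h; exact hz1 (by linear_combination -e1 + h + z * h3)
    · intro h; exact one_ne_zero (by linear_combination e1 - h : (1:F) = 0)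
    · intro h; exact hz1 (by linear_combination e1 - h - h3)
    · intro h; exact hz0 (by linear_combination e1 - h)
  · refine st15_noRel3 hd hns hdi hb u z (-1) ?_ hz0 (neg_ne_zero.mpr one_ne_zero)
      ?_ ?_ ?_ ?_ hzm1 (fun h => hz1 (by linear_combination h)) (by linear_combination e1) ?_
    · intro h; exact hz1 (by linear_combination e1 - h)
    · intro h; exact hzm1 (by linear_combination -e1 + h + z * h3)
    · intro h; exact one_ne_zero (by linear_combination h - e1 : (1:F) = 0)
    · intro h; exact hzm1 (by linear_combination e1 - h + h3)
    · intro h; exact hz0 (by linear_combination e1 - h)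
    · rw [hd.neg_one_pow]; linear_combination e2
  · refine st15_noRel3 hd hns hdi hb u (-z) 1 ?_ (neg_ne_zero.mpr hz0) one_ne_zero
      ?_ ?_ ?_ ?_ ?_ ?_ (by linear_combination e1) ?_
    · intro h; exact hz1 (by linear_combination -e1 + h)
    · intro h; exact hzm1 (by linear_combination e1 - h + z * h3)
    · intro h; exact one_ne_zero (by linear_combination e1 - h : (1:F) = 0)
    · intro h; exact hzm1 (by linear_combination -e1 + h + h3)
    · intro h; exact hz0 (by linear_combination -e1 + h)
    · intro h; exact hzm1 (by linear_combination -h)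
    · intro h; exact hz1 (by linear_combination -h)
    · rw [hd.neg_pow]; linear_combination e2
  · refine st15_noRel3 hd hns hdi hb u (-z) (-1) ?_ (neg_ne_zero.mpr hz0)
      (neg_ne_zero.mpr one_ne_zero) ?_ ?_ ?_ ?_ ?_ ?_ (by linear_combination e1) ?_
    · intro h; exact hzm1 (by linear_combination -e1 + h)
    · intro h; exact hz1 (by linear_combination e1 - h + z * h3)
    · intro h; exact one_ne_zero (by linear_combination h - e1 : (1:F) = 0)
    · intro h; exact hz1 (by linear_combination -e1 + h - h3)
    · intro h; exact hz0 (by linear_combination -e1 + h)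
    · intro h; exact hz1 (by linear_combination -h)
    · intro h; exact hzm1 (by linear_combination -h)
    · rw [hd.neg_pow, hd.neg_one_pow]; linear_combination e2

set_option maxHeartbeats 1000000 in
private theorem st15_main {F : Type*} [Field F] [Finite F] {d : ℕ}
    (hd : Odd d) (hd0 : d ≠ 0) (h3 : (3 : F) = 0)
    (hns : ¬ IsSquare (-1 : F))
    (hdi : ∀ t : F, t ≠ 0 → ¬ IsSquare t → IsSquare (-t))
    (ha : ∀ z : F, z ≠ 0 → z ≠ 1 → z ≠ -1 →
      {p : F × F | p.1 + p.2 + z + 1 = 0 ∧ p.1 ^ d + p.2 ^ d + z ^ d + 1 = 0 ∧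
        (p.1 + 1) * (p.1 + z) ≠ 0}.ncard +
      {p : F × F | p.1 + p.2 - z + 1 = 0 ∧ p.1 ^ d + p.2 ^ d - z ^ d + 1 = 0 ∧
        (p.1 + 1) * (p.1 - z) ≠ 0}.ncard = 2)
    (hb : ¬ ∃ (s : Finset F) (c : F → F),
      s.Nonempty ∧ s.card ≤ 3 ∧ (∀ x ∈ s, x ≠ 0 ∧ IsSquare x) ∧
      (∀ x ∈ s, c x = 1 ∨ c x = -1) ∧
      ∑ x ∈ s, c x * x = 0 ∧ ∑ x ∈ s, c x * x ^ d = 0)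
    (x₃ x₄ : F) (h34 : x₃ ≠ x₄) (h30 : x₃ ≠ 0) (h3sq : IsSquare x₃)
    (h40 : x₄ ≠ 0) (h4sq : IsSquare x₄) :
    ∃! s : Finset F,
      s.card = 2 ∧ (∀ x ∈ s, x ≠ 0 ∧ IsSquare x) ∧ x₃ ∉ s ∧ x₄ ∉ s ∧
      ∃ x₁ x₂ c₁ c₂ c₃ c₄ : F,
        (s : Set F) = {x₁, x₂} ∧ x₁ ≠ x₂ ∧
        (c₁ = 1 ∨ c₁ = -1) ∧ (c₂ = 1 ∨ c₂ = -1) ∧ (c₃ = 1 ∨ c₃ = -1) ∧ (c₄ = 1 ∨ c₄ = -1) ∧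
        c₁ * x₁ + c₂ * x₂ + c₃ * x₃ + c₄ * x₄ = 0 ∧
        c₁ * x₁ ^ d + c₂ * x₂ ^ d + c₃ * x₃ ^ d + c₄ * x₄ ^ d = 0 := by
  classical
  set z := x₃ * x₄⁻¹ with hzdef
  have hx₄i : IsSquare (x₄⁻¹ : F) := h4sq.inv
  have hx₄i0 : (x₄⁻¹ : F) ≠ 0 := inv_ne_zero h40
  have hz0 : z ≠ 0 := mul_ne_zero h30 hx₄i0
  have hzsq : IsSquare z := h3sq.mul hx₄i
  have hz1 : z ≠ 1 := by
    intro h; apply h34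
    have : x₃ * x₄⁻¹ * x₄ = 1 * x₄ := by rw [← hzdef, h]
    field_simp at this; exact this
  have hzm1 : z ≠ -1 := by
    intro h; exact hns (h ▸ hzsq)
  have hz4 : z * x₄ = x₃ := by rw [hzdef]; field_simp
  have hz4d : z ^ d * x₄ ^ d = x₃ ^ d := by
    rw [hzdef, mul_pow, inv_pow]; field_simp
  have hcount := ha z hz0 hz1 hzm1
  set S₁ := {p : F × F | p.1 + p.2 + z + 1 = 0 ∧ p.1 ^ d + p.2 ^ d + z ^ d + 1 = 0 ∧
    (p.1 + 1) * (p.1 + z) ≠ 0} with hS₁def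
  set S₂ := {p : F × F | p.1 + p.2 - z + 1 = 0 ∧ p.1 ^ d + p.2 ^ d - z ^ d + 1 = 0 ∧
    (p.1 + 1) * (p.1 - z) ≠ 0} with hS₂def
  -- exclusions
  have excl : ∀ x y : F, (x, y) ∈ S₁ ∪ S₂ →
      x ≠ 0 ∧ y ≠ 0 ∧ x ≠ 1 ∧ x ≠ -1 ∧ x ≠ z ∧ x ≠ -z ∧
      y ≠ 1 ∧ y ≠ -1 ∧ y ≠ z ∧ y ≠ -z ∧ x ≠ y ∧ x ≠ -y := by
    intro x y hxy
    rcases hxy with hmem | hmem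
    · obtain ⟨E1, E2, C⟩ := hmem
      simp only at E1 E2 C
      have hC1 : x ≠ -1 := fun h => C (by rw [h]; ring)
      have hC2 : x ≠ -z := fun h => C (by rw [h]; ring)
      have hx1 : x ≠ 1 := by
        intro h
        have hp : x ^ d = 1 := by rw [h]; exact one_pow d
        exact st15_keyZ hd hns hdi hb h3 hz0 hz1 hzm1 y 1 (-1) (Or.inl rfl) (Or.inr rfl)
          (by linear_combination E1 - h - h3) (by linear_combination E2 - hp - h3)
      have hxz : x ≠ z := by
        intro h
        have hp : x ^ d = z ^ d := by rw [h]
        exact st15_keyZ hd hns hdi hb h3 hz0 hz1 hzm1 y (-1) 1 (Or.inr rfl) (Or.inl rfl)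
          (by linear_combination E1 - h - z * h3) (by linear_combination E2 - hp - z ^ d * h3)
      have hy1 : y ≠ 1 := by
        intro h
        have hp : y ^ d = 1 := by rw [h]; exact one_pow d
        exact st15_keyZ hd hns hdi hb h3 hz0 hz1 hzm1 x 1 (-1) (Or.inl rfl) (Or.inr rfl)
          (by linear_combination E1 - h - h3) (by linear_combination E2 - hp - h3)
      have hyz : y ≠ z := by
        intro h
        have hp : y ^ d = z ^ d := by rw [h]
        exact st15_keyZ hd hns hdi hb h3 hz0 hz1 hzm1 x (-1) 1 (Or.inr rfl) (Or.inl rfl)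
          (by linear_combination E1 - h - z * h3) (by linear_combination E2 - hp - z ^ d * h3)
      refine ⟨?_, ?_, hx1, hC1, hxz, hC2, hy1, ?_, hyz, ?_, ?_, ?_⟩
      · intro h
        have hp : x ^ d = 0 := by rw [h]; exact zero_pow hd0
        exact st15_keyZ hd hns hdi hb h3 hz0 hz1 hzm1 y 1 1 (Or.inl rfl) (Or.inl rfl)
          (by linear_combination E1 - h) (by linear_combination E2 - hp)
      · intro h
        have hp : y ^ d = 0 := by rw [h]; exact zero_pow hd0
        exact st15_keyZ hd hns hdi hb h3 hz0 hz1 hzm1 x 1 1 (Or.inl rfl) (Or.inl rfl)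
          (by linear_combination E1 - h) (by linear_combination E2 - hp)
      · intro h; exact hC2 (by linear_combination E1 - h)
      · intro h; exact hC1 (by linear_combination E1 - h)
      · intro h
        have hp : x ^ d = y ^ d := by rw [h]
        refine st15_keyZ hd hns hdi hb h3 hz0 hz1 hzm1 (-x) 1 1 (Or.inl rfl) (Or.inl rfl)
          (by linear_combination E1 + h - x * h3) ?_
        rw [hd.neg_pow]
        linear_combination E2 + hp - x ^ d * h3
      · intro h; exact hzm1 (by linear_combination E1 - h)
    · obtain ⟨E1, E2, C⟩ := hmem
      simp only at E1 E2 C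
      have hC1 : x ≠ -1 := fun h => C (by rw [h]; ring)
      have hC2 : x ≠ z := fun h => C (by rw [h]; ring)
      have hx1 : x ≠ 1 := by
        intro h
        have hp : x ^ d = 1 := by rw [h]; exact one_pow d
        exact st15_keyZ hd hns hdi hb h3 hz0 hz1 hzm1 y (-1) (-1) (Or.inr rfl) (Or.inr rfl)
          (by linear_combination E1 - h - h3) (by linear_combination E2 - hp - h3)
      have hxmz : x ≠ -z := by
        intro h
        have hp : x ^ d = -z ^ d := by rw [h]; exact hd.neg_pow z
        exact st15_keyZ hd hns hdi hb h3 hz0 hz1 hzm1 y 1 1 (Or.inl rfl) (Or.inl rfl)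
          (by linear_combination E1 - h + z * h3) (by linear_combination E2 - hp + z ^ d * h3)
      have hy1 : y ≠ 1 := by
        intro h
        have hp : y ^ d = 1 := by rw [h]; exact one_pow d
        exact st15_keyZ hd hns hdi hb h3 hz0 hz1 hzm1 x (-1) (-1) (Or.inr rfl) (Or.inr rfl)
          (by linear_combination E1 - h - h3) (by linear_combination E2 - hp - h3)
      have hymz : y ≠ -z := by
        intro h
        have hp : y ^ d = -z ^ d := by rw [h]; exact hd.neg_pow z
        exact st15_keyZ hd hns hdi hb h3 hz0 hz1 hzm1 x 1 1 (Or.inl rfl) (Or.inl rfl)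
          (by linear_combination E1 - h + z * h3) (by linear_combination E2 - hp + z ^ d * h3)
      refine ⟨?_, ?_, hx1, hC1, hC2, hxmz, hy1, ?_, ?_, hymz, ?_, ?_⟩
      · intro h
        have hp : x ^ d = 0 := by rw [h]; exact zero_pow hd0
        exact st15_keyZ hd hns hdi hb h3 hz0 hz1 hzm1 y (-1) 1 (Or.inr rfl) (Or.inl rfl)
          (by linear_combination E1 - h) (by linear_combination E2 - hp)
      · intro h
        have hp : y ^ d = 0 := by rw [h]; exact zero_pow hd0
        exact st15_keyZ hd hns hdi hb h3 hz0 hz1 hzm1 x (-1) 1 (Or.inr rfl) (Or.inl rfl)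
          (by linear_combination E1 - h) (by linear_combination E2 - hp)
      · intro h; exact hC2 (by linear_combination E1 - h)
      · intro h; exact hC1 (by linear_combination E1 - h)
      · intro h
        have hp : x ^ d = y ^ d := by rw [h]
        refine st15_keyZ hd hns hdi hb h3 hz0 hz1 hzm1 (-x) (-1) 1 (Or.inr rfl) (Or.inl rfl)
          (by linear_combination E1 + h - x * h3) ?_
        rw [hd.neg_pow]
        linear_combination E2 + hp - x ^ d * h3
      · intro h; exact hz1 (by linear_combination -E1 + h)
  -- swap closure
  have hswap : ∀ x y : F, (x, y) ∈ S₁ ∪ S₂ → (y, x) ∈ S₁ ∪ S₂ := by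
    intro x y hxy
    obtain ⟨hx0, hy0, hx1, hxm1, hxz, hxmz, hy1, hym1, hyz, hymz, hxy', hxmy⟩ := excl x y hxy
    rcases hxy with hmem | hmem
    · obtain ⟨E1, E2, C⟩ := hmem
      simp only at E1 E2 C
      left
      refine ⟨by simp; linear_combination E1, by simp; linear_combination E2, ?_⟩
      simp only
      apply mul_ne_zero
      · intro h; exact hym1 (by linear_combination h)
      · intro h; exact hymz (by linear_combination h)
    · obtain ⟨E1, E2, C⟩ := hmem
      simp only at E1 E2 C
      right
      refine ⟨by simp; linear_combination E1, by simp; linear_combination E2, ?_⟩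
      simp only
      apply mul_ne_zero
      · intro h; exact hym1 (by linear_combination h)
      · intro h; exact hyz (by linear_combination h)
  -- sign and absolute value machinery
  set sgn : F → F := fun t => if IsSquare t then (1 : F) else -1 with hsgndef
  have hsgval : ∀ t : F, sgn t = 1 ∨ sgn t = -1 := by
    intro t; by_cases h : IsSquare t <;> simp [hsgndef, h]
  have hsgsq : ∀ t : F, sgn t * sgn t = 1 := by
    intro t; rcases hsgval t with h | h <;> rw [h] <;> ring
  have hsgd : ∀ t : F, (sgn t) ^ d = sgn t := by
    intro t; rcases hsgval t with h | h <;> rw [h]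
    · exact one_pow d
    · exact hd.neg_one_pow
  set ab : F → F := fun t => sgn t * t with habdef
  have hab_or : ∀ t : F, ab t = t ∨ ab t = -t := by
    intro t; rcases hsgval t with h | h <;> rw [habdef] <;> simp only [h] <;> [left; right] <;> ring
  have hab_sq : ∀ t : F, t ≠ 0 → IsSquare (ab t) := by
    intro t ht; rw [habdef]; simp only [hsgndef]
    by_cases h : IsSquare t <;> simp [h]
    exact hdi t ht h
  have hab_ne : ∀ t : F, t ≠ 0 → ab t ≠ 0 := by
    intro t ht
    rcases hab_or t with h | h <;> rw [h] <;> simpa using ht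
  have habs1 : ∀ t : F, sgn t * (ab t * x₄) = t * x₄ := by
    intro t; rw [habdef]; simp only
    linear_combination (t * x₄) * hsgsq t
  have habsd : ∀ t : F, sgn t * (ab t * x₄) ^ d = t ^ d * x₄ ^ d := by
    intro t; rw [habdef]; simp only
    rw [mul_pow, mul_pow, hsgd t]
    linear_combination (t ^ d * x₄ ^ d) * hsgsq t
  -- direction I : every solution gives a good block
  have dirI : ∀ x y : F, (x, y) ∈ S₁ ∪ S₂ →
      (({ab x * x₄, ab y * x₄} : Finset F).card = 2 ∧
      (∀ t ∈ ({ab x * x₄, ab y * x₄} : Finset F), t ≠ 0 ∧ IsSquare t) ∧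
      x₃ ∉ ({ab x * x₄, ab y * x₄} : Finset F) ∧ x₄ ∉ ({ab x * x₄, ab y * x₄} : Finset F) ∧
      ∃ x₁ x₂ c₁ c₂ c₃ c₄ : F,
        (({ab x * x₄, ab y * x₄} : Finset F) : Set F) = {x₁, x₂} ∧ x₁ ≠ x₂ ∧
        (c₁ = 1 ∨ c₁ = -1) ∧ (c₂ = 1 ∨ c₂ = -1) ∧ (c₃ = 1 ∨ c₃ = -1) ∧ (c₄ = 1 ∨ c₄ = -1) ∧
        c₁ * x₁ + c₂ * x₂ + c₃ * x₃ + c₄ * x₄ = 0 ∧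
        c₁ * x₁ ^ d + c₂ * x₂ ^ d + c₃ * x₃ ^ d + c₄ * x₄ ^ d = 0) := by
    intro x y hxy
    obtain ⟨hx0, hy0, hx1, hxm1, hxz, hxmz, hy1, hym1, hyz, hymz, hxyne, hxmy⟩ := excl x y hxy
    have habne : ab x * x₄ ≠ ab y * x₄ := by
      intro h
      have h' : ab x = ab y := mul_right_cancel₀ h40 h
      rcases hab_or x with h1 | h1 <;> rcases hab_or y with h2 | h2 <;> rw [h1, h2] at h'
      · exact hxyne h'
      · exact hxmy h'
      · exact hxmy (by linear_combination -h')
      · exact hxyne (by linear_combination -h')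
    have hmem3 : x₃ ∉ ({ab x * x₄, ab y * x₄} : Finset F) := by
      intro hmem'
      rcases Finset.mem_insert.mp hmem' with h | h
      · have h' : ab x = z := mul_right_cancel₀ h40 (by rw [← h, hz4])
        rcases hab_or x with h1 | h1 <;> rw [h1] at h'
        · exact hxz h'
        · exact hxmz (by linear_combination -h')
      · have h' : ab y = z := mul_right_cancel₀ h40 (by rw [← Finset.mem_singleton.mp h, hz4])
        rcases hab_or y with h1 | h1 <;> rw [h1] at h'
        · exact hyz h'
        · exact hymz (by linear_combination -h')
    have hmem4 : x₄ ∉ ({ab x * x₄, ab y * x₄} : Finset F) := by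
      intro hmem'
      rcases Finset.mem_insert.mp hmem' with h | h
      · have h' : ab x = 1 := mul_right_cancel₀ h40 (by rw [← h]; ring)
        rcases hab_or x with h1 | h1 <;> rw [h1] at h'
        · exact hx1 h'
        · exact hxm1 (by linear_combination -h')
      · have h' : ab y = 1 := mul_right_cancel₀ h40
          (by rw [← Finset.mem_singleton.mp h]; ring)
        rcases hab_or y with h1 | h1 <;> rw [h1] at h'
        · exact hy1 h'
        · exact hym1 (by linear_combination -h')
    refine ⟨Finset.card_pair habne, ?_, hmem3, hmem4, ?_⟩
    · intro t ht
      rcases Finset.mem_insert.mp ht with rfl | ht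
      · exact ⟨mul_ne_zero (hab_ne x hx0) h40, (hab_sq x hx0).mul h4sq⟩
      · rw [Finset.mem_singleton.mp ht]
        exact ⟨mul_ne_zero (hab_ne y hy0) h40, (hab_sq y hy0).mul h4sq⟩
    rcases hxy with hmem | hmem
    · obtain ⟨E1, E2, C⟩ := hmem
      simp only at E1 E2 C
      refine ⟨ab x * x₄, ab y * x₄, sgn x, sgn y, 1, 1, by simp, habne,
        hsgval x, hsgval y, Or.inl rfl, Or.inl rfl, ?_, ?_⟩
      · linear_combination x₄ * E1 + habs1 x + habs1 y - hz4
      · linear_combination x₄ ^ d * E2 + habsd x + habsd y - hz4d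
    · obtain ⟨E1, E2, C⟩ := hmem
      simp only at E1 E2 C
      refine ⟨ab x * x₄, ab y * x₄, sgn x, sgn y, -1, 1, by simp, habne,
        hsgval x, hsgval y, Or.inr rfl, Or.inl rfl, ?_, ?_⟩
      · linear_combination x₄ * E1 + habs1 x + habs1 y + hz4
      · linear_combination x₄ ^ d * E2 + habsd x + habsd y + hz4d
  have h44 : x₄ * x₄⁻¹ = 1 := mul_inv_cancel₀ h40
  have hi : x₄⁻¹ * x₄ = 1 := inv_mul_cancel₀ h40
  have hid : (x₄ ^ d)⁻¹ * x₄ ^ d = 1 := inv_mul_cancel₀ (pow_ne_zero d h40)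
  -- helper1 : normalization inverts ab
  have helper1 : ∀ (e t : F), (e = 1 ∨ e = -1) → t ≠ 0 → IsSquare t →
      ab (e * t * x₄⁻¹) * x₄ = t := by
    intro e t he ht0 htsq
    have htx : IsSquare (t * x₄⁻¹) := htsq.mul hx₄i
    rcases he with rfl | rfl
    · have hu : IsSquare ((1 : F) * t * x₄⁻¹) := by rw [one_mul]; exact htx
      have hs : sgn (1 * t * x₄⁻¹) = 1 := by simp only [hsgndef]; rw [if_pos hu]
      rw [habdef]; simp only; rw [hs]
      field_simp
    · have hu : ¬ IsSquare ((-1 : F) * t * x₄⁻¹) := by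
        intro hh
        refine st15_notboth hns (mul_ne_zero ht0 hx₄i0) htx ?_
        rw [show -(t * x₄⁻¹) = (-1 : F) * t * x₄⁻¹ by ring]; exact hh
      have hs : sgn (-1 * t * x₄⁻¹) = -1 := by simp only [hsgndef]; rw [if_neg hu]
      rw [habdef]; simp only; rw [hs]
      field_simp
  -- helper2 : normalized values avoid ± other squares
  have helper2 : ∀ (e t w : F), (e = 1 ∨ e = -1) → t ≠ 0 → IsSquare t →
      w ≠ 0 → IsSquare w → t ≠ w →
      e * t * x₄⁻¹ ≠ w * x₄⁻¹ ∧ e * t * x₄⁻¹ ≠ -(w * x₄⁻¹) := by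
    intro e t w he ht0 htsq hw0 hwsq htw
    constructor
    · intro h
      have h' : (e * t) * x₄⁻¹ = w * x₄⁻¹ := by linear_combination h
      have h'' : e * t = w := mul_right_cancel₀ hx₄i0 h'
      rcases he with rfl | rfl
      · exact htw (by linear_combination h'')
      · have hwm : w = -t := by linear_combination -h''
        apply hns
        have hsq : IsSquare (w * t⁻¹) := hwsq.mul htsq.inv
        rwa [hwm, neg_mul, mul_inv_cancel₀ ht0] at hsq
    · intro h
      have h' : (e * t) * x₄⁻¹ = (-w) * x₄⁻¹ := by linear_combination h
      have h'' : e * t = -w := mul_right_cancel₀ hx₄i0 h'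
      rcases he with rfl | rfl
      · have hwm : w = -t := by linear_combination h''
        apply hns
        have hsq : IsSquare (w * t⁻¹) := hwsq.mul htsq.inv
        rwa [hwm, neg_mul, mul_inv_cancel₀ ht0] at hsq
      · exact htw (by linear_combination -h'')
  -- direction II : every good block comes from a solution
  have dirII : ∀ s : Finset F,
      (s.card = 2 ∧ (∀ x ∈ s, x ≠ 0 ∧ IsSquare x) ∧ x₃ ∉ s ∧ x₄ ∉ s ∧
      ∃ x₁ x₂ c₁ c₂ c₃ c₄ : F,
        (s : Set F) = {x₁, x₂} ∧ x₁ ≠ x₂ ∧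
        (c₁ = 1 ∨ c₁ = -1) ∧ (c₂ = 1 ∨ c₂ = -1) ∧ (c₃ = 1 ∨ c₃ = -1) ∧ (c₄ = 1 ∨ c₄ = -1) ∧
        c₁ * x₁ + c₂ * x₂ + c₃ * x₃ + c₄ * x₄ = 0 ∧
        c₁ * x₁ ^ d + c₂ * x₂ ^ d + c₃ * x₃ ^ d + c₄ * x₄ ^ d = 0) →
      ∃ x y : F, (x, y) ∈ S₁ ∪ S₂ ∧ s = {ab x * x₄, ab y * x₄} := by
    rintro s ⟨hcard, hsq, h3s, h4s, x₁, x₂, c₁, c₂, c₃, c₄, hcoe, h12,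
      hc₁, hc₂, hc₃, hc₄, heq1, heq2⟩
    have hx₁s : x₁ ∈ s := by
      rw [← Finset.mem_coe, hcoe]; exact Set.mem_insert _ _
    have hx₂s : x₂ ∈ s := by
      rw [← Finset.mem_coe, hcoe]; exact Set.mem_insert_iff.mpr (Or.inr rfl)
    obtain ⟨hx₁0, hx₁sq⟩ := hsq x₁ hx₁s
    obtain ⟨hx₂0, hx₂sq⟩ := hsq x₂ hx₂s
    have hx₁3 : x₁ ≠ x₃ := fun h => h3s (h ▸ hx₁s)
    have hx₁4 : x₁ ≠ x₄ := fun h => h4s (h ▸ hx₁s)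
    have hx₂3 : x₂ ≠ x₃ := fun h => h3s (h ▸ hx₂s)
    have hx₂4 : x₂ ≠ x₄ := fun h => h4s (h ▸ hx₂s)
    have hsfin : s = ({x₁, x₂} : Finset F) := Finset.coe_injective (by rw [hcoe]; simp)
    have hE1 : (c₄*c₁)*x₁ + (c₄*c₂)*x₂ + (c₄*c₃)*x₃ + x₄ = 0 := by
      rcases hc₄ with rfl | rfl
      · linear_combination heq1
      · linear_combination -heq1
    have hE2 : (c₄*c₁)*x₁^d + (c₄*c₂)*x₂^d + (c₄*c₃)*x₃^d + x₄^d = 0 := by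
      rcases hc₄ with rfl | rfl
      · linear_combination heq2
      · linear_combination -heq2
    have hb₁ : c₄*c₁ = 1 ∨ c₄*c₁ = -1 := by
      rcases hc₄ with rfl|rfl <;> rcases hc₁ with rfl|rfl <;> norm_num
    have hb₂ : c₄*c₂ = 1 ∨ c₄*c₂ = -1 := by
      rcases hc₄ with rfl|rfl <;> rcases hc₂ with rfl|rfl <;> norm_num
    have hb₃ : c₄*c₃ = 1 ∨ c₄*c₃ = -1 := by
      rcases hc₄ with rfl|rfl <;> rcases hc₃ with rfl|rfl <;> norm_num
    have hpow : ∀ (e t : F), (e = 1 ∨ e = -1) → (e * t * x₄⁻¹)^d = e * t^d * (x₄^d)⁻¹ := by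
      intro e t he; rw [mul_pow, mul_pow, inv_pow]
      rcases he with rfl | rfl
      · rw [one_pow]
      · rw [hd.neg_one_pow]
    have hzd : z ^ d = x₃ ^ d * (x₄ ^ d)⁻¹ := by rw [hzdef, mul_pow, inv_pow]
    obtain ⟨hA4, hB4⟩ := helper2 (c₄*c₁) x₁ x₄ hb₁ hx₁0 hx₁sq h40 h4sq hx₁4
    obtain ⟨hA3, hB3⟩ := helper2 (c₄*c₁) x₁ x₃ hb₁ hx₁0 hx₁sq h30 h3sq hx₁3
    refine ⟨(c₄*c₁) * x₁ * x₄⁻¹, (c₄*c₂) * x₂ * x₄⁻¹, ?_, ?_⟩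
    · rcases hb₃ with h₃ | h₃
      · left
        refine ⟨?_, ?_, ?_⟩
        · simp only
          refine mul_right_cancel₀ h40 ?_
          linear_combination hE1 - x₃ * h₃ + ((c₄*c₁)*x₁) * hi + ((c₄*c₂)*x₂) * hi + hz4
        · simp only
          rw [hpow _ _ hb₁, hpow _ _ hb₂, hzd]
          refine mul_right_cancel₀ (pow_ne_zero d h40) ?_
          linear_combination hE2 - x₃^d * h₃ + ((c₄*c₁)*x₁^d) * hid
            + ((c₄*c₂)*x₂^d) * hid + (x₃^d) * hid
        · simp only
          apply mul_ne_zero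
          · intro h; exact hB4 (by linear_combination h + h44)
          · intro h; exact hB3 (by linear_combination h - hzdef)
      · right
        refine ⟨?_, ?_, ?_⟩
        · simp only
          refine mul_right_cancel₀ h40 ?_
          linear_combination hE1 - x₃ * h₃ + ((c₄*c₁)*x₁) * hi + ((c₄*c₂)*x₂) * hi - hz4
        · simp only
          rw [hpow _ _ hb₁, hpow _ _ hb₂, hzd]
          refine mul_right_cancel₀ (pow_ne_zero d h40) ?_
          linear_combination hE2 - x₃^d * h₃ + ((c₄*c₁)*x₁^d) * hid
            + ((c₄*c₂)*x₂^d) * hid - (x₃^d) * hid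
        · simp only
          apply mul_ne_zero
          · intro h; exact hB4 (by linear_combination h + h44)
          · intro h; exact hA3 (by linear_combination h + hzdef)
    · rw [helper1 _ _ hb₁ hx₁0 hx₁sq, helper1 _ _ hb₂ hx₂0 hx₂sq]
      exact hsfin
  -- final assembly
  have hdisj : Disjoint S₁ S₂ := by
    rw [Set.disjoint_left]
    intro p hp1 hp2
    obtain ⟨e1, _, _⟩ := hp1
    obtain ⟨e1', _, _⟩ := hp2
    exact hz0 (by linear_combination -e1 + e1' + z * h3)
  have hU2 : (S₁ ∪ S₂).ncard = 2 := by
    rw [Set.ncard_union_eq hdisj (Set.toFinite _) (Set.toFinite _)]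
    exact hcount
  rw [Set.ncard_eq_two] at hU2
  obtain ⟨p, q, hpq, hU⟩ := hU2
  have hpU : p ∈ S₁ ∪ S₂ := by rw [hU]; exact Set.mem_insert _ _
  have hpU' : (p.1, p.2) ∈ S₁ ∪ S₂ := by rwa [Prod.mk.eta]
  have hpsU : (p.2, p.1) ∈ S₁ ∪ S₂ := hswap p.1 p.2 hpU'
  have hpne : p.1 ≠ p.2 := (excl p.1 p.2 hpU').2.2.2.2.2.2.2.2.2.2.1
  have hqs : q = (p.2, p.1) := by
    have h2 : (p.2, p.1) ∈ ({p, q} : Set (F × F)) := by rw [← hU]; exact hpsU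
    rcases Set.mem_insert_iff.mp h2 with h | h
    · exact absurd (congrArg Prod.snd h) hpne
    · exact (Set.mem_singleton_iff.mp h).symm
  refine ⟨{ab p.1 * x₄, ab p.2 * x₄}, dirI p.1 p.2 hpU', ?_⟩
  intro s hs
  obtain ⟨x, y, hmemxy, hseq⟩ := dirII s hs
  have hxy : (x, y) ∈ ({p, q} : Set (F × F)) := by rw [← hU]; exact hmemxy
  rcases Set.mem_insert_iff.mp hxy with h | h
  · rw [hseq]
    have hx : x = p.1 := congrArg Prod.fst h
    have hy : y = p.2 := congrArg Prod.snd h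
    rw [hx, hy]
  · have h' : (x, y) = q := Set.mem_singleton_iff.mp h
    rw [hseq]
    have hx : x = p.2 := by rw [hqs] at h'; exact congrArg Prod.fst h'
    have hy : y = p.1 := by rw [hqs] at h'; exact congrArg Prod.snd h'
    rw [hx, hy, Finset.pair_comm]

/-- Under hypotheses (a) (Lemma 4.2 counting) and (b) (no ≤3-subset of nonzero squares
solves the homogeneous system), for every pair of distinct nonzero squares x₃,x₄ in
GF(3^{2m+1}) there is exactly one 2-subset {x₁,x₂} of nonzero squares disjoint from
{x₃,x₄} and signs c₁,...,c₄ ∈ {1,-1} with c₁x₁+c₂x₂+c₃x₃+c₄x₄ = 0 and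
c₁x₁^d+c₂x₂^d+c₃x₃^d+c₄x₄^d = 0; hence the weight-4 dual codewords support a
Steiner system S(2,4,(q-1)/2). -/
theorem stmt_15 (m : ℕ) (hm : 2 ≤ m) :
    ∀ (d : ℕ), d = 2 * 3 ^ m + 1 →
    -- hypothesis (a)
    (∀ z : GaloisField 3 (2 * m + 1), z ≠ 0 → z ≠ 1 → z ≠ -1 →
      {p : GaloisField 3 (2 * m + 1) × GaloisField 3 (2 * m + 1) |
        p.1 + p.2 + z + 1 = 0 ∧ p.1 ^ d + p.2 ^ d + z ^ d + 1 = 0 ∧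
        (p.1 + 1) * (p.1 + z) ≠ 0}.ncard +
      {p : GaloisField 3 (2 * m + 1) × GaloisField 3 (2 * m + 1) |
        p.1 + p.2 - z + 1 = 0 ∧ p.1 ^ d + p.2 ^ d - z ^ d + 1 = 0 ∧
        (p.1 + 1) * (p.1 - z) ≠ 0}.ncard = 2) →
    -- hypothesis (b)
    (¬ ∃ (s : Finset (GaloisField 3 (2 * m + 1))) (c : GaloisField 3 (2 * m + 1) →
        GaloisField 3 (2 * m + 1)),
      s.Nonempty ∧ s.card ≤ 3 ∧ (∀ x ∈ s, x ≠ 0 ∧ IsSquare x) ∧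
      (∀ x ∈ s, c x = 1 ∨ c x = -1) ∧
      ∑ x ∈ s, c x * x = 0 ∧ ∑ x ∈ s, c x * x ^ d = 0) →
    ∀ x₃ x₄ : GaloisField 3 (2 * m + 1), x₃ ≠ x₄ →
      x₃ ≠ 0 → IsSquare x₃ → x₄ ≠ 0 → IsSquare x₄ →
      ∃! s : Finset (GaloisField 3 (2 * m + 1)),
        s.card = 2 ∧ (∀ x ∈ s, x ≠ 0 ∧ IsSquare x) ∧ x₃ ∉ s ∧ x₄ ∉ s ∧
        ∃ x₁ x₂ c₁ c₂ c₃ c₄ : GaloisField 3 (2 * m + 1),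
          (s : Set (GaloisField 3 (2 * m + 1))) = {x₁, x₂} ∧ x₁ ≠ x₂ ∧
          (c₁ = 1 ∨ c₁ = -1) ∧ (c₂ = 1 ∨ c₂ = -1) ∧ (c₃ = 1 ∨ c₃ = -1) ∧ (c₄ = 1 ∨ c₄ = -1) ∧
          c₁ * x₁ + c₂ * x₂ + c₃ * x₃ + c₄ * x₄ = 0 ∧
          c₁ * x₁ ^ d + c₂ * x₂ ^ d + c₃ * x₃ ^ d + c₄ * x₄ ^ d = 0 := by
  intro d hd ha hb x₃ x₄ h34 h30 h3sq h40 h4sq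
  classical
  have hdodd : Odd d := by rw [Nat.odd_iff]; omega
  have hd0 : d ≠ 0 := by omega
  letI : Fintype (GaloisField 3 (2 * m + 1)) := Fintype.ofFinite _
  have hcard : Fintype.card (GaloisField 3 (2 * m + 1)) = 3 ^ (2 * m + 1) := by
    rw [← Nat.card_eq_fintype_card]
    exact GaloisField.card 3 (2 * m + 1) (by omega)
  have hmod : 3 ^ (2 * m + 1) % 4 = 3 := by
    rw [pow_succ, pow_mul, Nat.mul_mod, Nat.pow_mod]
    norm_num
  have hns : ¬ IsSquare (-1 : GaloisField 3 (2 * m + 1)) := by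
    rw [FiniteField.isSquare_neg_one_iff, hcard, hmod]
    simp
  have hdi : ∀ t : GaloisField 3 (2 * m + 1), t ≠ 0 → ¬ IsSquare t → IsSquare (-t) :=
    fun t ht h => st15_dichot hns ht h
  have h3 : (3 : GaloisField 3 (2 * m + 1)) = 0 := by
    have := CharP.cast_eq_zero (GaloisField 3 (2 * m + 1)) 3
    exact_mod_cast this
  exact st15_main hdodd hd0 h3 hns hdi ha hb x₃ x₄ h34 h30 h3sq h40 h4sq
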